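/- Let 0 ≤ ν ≤ 1, 0 < μ < 1, λ > 0, T > 0, and define v(t) := (T−t)^{−ν(1−μ)} E_{μ,1−ν(1−μ)}(−λ (T−t)^μ) for 0 < t < T. Then: (i) I_{t,T}^{ν(1−μ)} v(t) = E_{μ,1}(−λ (T−t)^μ) for 0 ≤ t < T, so lim_{t→T⁻} I_{t,T}^{ν(1−μ)} v(t) = 1; and (ii) the right Hilfer fractional derivative of order (μ, 1−ν) satisfies D_{t,T}^{μ,1−ν} v(t) = −λ v(t) for every 0 < t < T. -/

import Mathlib

/-- The right Riemann-Liouville fractional integral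
`(I_{t,T}^α u)(t) = (1/Γ(α)) ∫ₜᵀ (τ-t)^(α-1) u(τ) dτ`, with `I_{t,T}^0 u = u`. -/
noncomputable def rlIR (a T : ℝ) (u : ℝ → ℝ) (t : ℝ) : ℝ :=
  if a = 0 then u t
  else (Real.Gamma a)⁻¹ * ∫ τ in t..T, (τ - t) ^ (a - 1) * u τ

/-- The right Hilfer fractional derivative of order `(μ,ν')`:
`(D_{t,T}^{μ,ν'} u)(t) = -I_{t,T}^{ν'(1-μ)}[(d/dt)(I_{t,T}^{(1-ν')(1-μ)} u)](t)`. -/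
noncomputable def hilferDR (μ ν' T : ℝ) (u : ℝ → ℝ) (t : ℝ) : ℝ :=
  -(rlIR (ν' * (1 - μ)) T (deriv (rlIR ((1 - ν') * (1 - μ)) T u)) t)

/-- The (real) Mittag-Leffler function `E_{α,β}(x) = ∑_{n=0}^∞ xⁿ/Γ(αn+β)`. -/
noncomputable def mlE (a b x : ℝ) : ℝ :=
  ∑' n : ℕ, x ^ n / Real.Gamma (a * n + b)


open MeasureTheory Set Filter intervalIntegral

section AuxML
variable {μ b : ℝ}
lemma gamma_gautschi {μ x : ℝ} (hμ0 : 0 < μ) (hμ1 : μ < 1) (hx : 0 < x) :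
    x * Real.Gamma x ≤ Real.Gamma (x + μ) * (x + μ) ^ (1 - μ) := by
  have h1 : (0:ℝ) < x + μ := by linarith
  have h2 : (0:ℝ) < x + μ + 1 := by linarith
  have hc := Real.convexOn_log_Gamma.2 (mem_Ioi.2 h1) (mem_Ioi.2 h2)
      (le_of_lt hμ0) (by linarith : (0:ℝ) ≤ 1 - μ) (by ring)
  have hcomb : μ • (x + μ) + (1 - μ) • (x + μ + 1) = x + 1 := by simp; ring
  rw [hcomb] at hc
  simp only [Function.comp_apply, smul_eq_mul] at hc
  have hpos2 : 0 < Real.Gamma (x + μ) := Real.Gamma_pos_of_pos h1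
  have hposx : 0 < Real.Gamma x := Real.Gamma_pos_of_pos hx
  have hg1 : Real.Gamma (x + 1) = x * Real.Gamma x := Real.Gamma_add_one (ne_of_gt hx)
  have hg2 : Real.Gamma (x + μ + 1) = (x + μ) * Real.Gamma (x + μ) :=
    Real.Gamma_add_one (ne_of_gt h1)
  have hL : Real.log (x * Real.Gamma x) ≤
      Real.log (Real.Gamma (x + μ) * (x + μ) ^ (1 - μ)) := by
    rw [← hg1, Real.log_mul (ne_of_gt hpos2) (ne_of_gt (Real.rpow_pos_of_pos h1 _)),
      Real.log_rpow h1]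
    rw [hg2, Real.log_mul (ne_of_gt h1) (ne_of_gt hpos2)] at hc
    nlinarith [hc]
  exact (Real.log_le_log_iff (by positivity) (by positivity)).1 hL

lemma ml_summable {μ b : ℝ} (hμ0 : 0 < μ) (hμ1 : μ < 1) (hb : 0 < b) {C : ℝ} (hC : 0 ≤ C) :
    Summable (fun n : ℕ => C ^ n / Real.Gamma (μ * n + b)) := by
  rcases eq_or_lt_of_le hC with hC0 | hC0
  · apply summable_of_ne_finset_zero (s := {0})
    intro n hn
    simp only [Finset.mem_singleton] at hn
    rw [← hC0, zero_pow hn, zero_div]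
  · apply summable_of_ratio_norm_eventually_le (r := 1/2) (by norm_num)
    have hx_tendsto : Tendsto (fun n : ℕ => μ * n + b) atTop atTop := by
      apply Filter.tendsto_atTop_add_const_right
      exact (tendsto_natCast_atTop_atTop).const_mul_atTop hμ0
    filter_upwards [hx_tendsto.eventually_ge_atTop 1,
      hx_tendsto.eventually_ge_atTop ((8 * C + 1) ^ (1 / μ))] with n h1 h4
    set x := μ * n + b with hxdef
    have hx0 : (0 : ℝ) < x := lt_of_lt_of_le one_pos h1
    have hxμ : μ * (n + 1 : ℕ) + b = x + μ := by push_cast; ring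
    have hΓ1 : 0 < Real.Gamma x := Real.Gamma_pos_of_pos hx0
    have hΓ2 : 0 < Real.Gamma (x + μ) := Real.Gamma_pos_of_pos (by linarith)
    -- rpow facts
    have hxμpow : 8 * C + 1 ≤ x ^ μ := by
      calc 8 * C + 1 = ((8 * C + 1) ^ (1 / μ)) ^ μ := by
            rw [← Real.rpow_mul (by positivity), one_div_mul_cancel (ne_of_gt hμ0),
              Real.rpow_one]
        _ ≤ x ^ μ := Real.rpow_le_rpow (by positivity) h4 hμ0.le
    have key : 2 * C * (x + μ) ^ (1 - μ) ≤ x := by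
      have e1 : (x + μ) ^ (1 - μ) ≤ (2 * x) ^ (1 - μ) :=
        Real.rpow_le_rpow (by linarith) (by linarith) (by linarith)
      have e2 : (2 * x) ^ (1 - μ) ≤ 2 * x ^ (1 - μ) := by
        rw [Real.mul_rpow (by norm_num) hx0.le]
        have : (2:ℝ) ^ (1 - μ) ≤ 2 ^ (1:ℝ) :=
          Real.rpow_le_rpow_of_exponent_le (by norm_num) (by linarith)
        rw [Real.rpow_one] at this
        exact mul_le_mul_of_nonneg_right this (Real.rpow_nonneg hx0.le _)
      have e3 : x ^ μ * x ^ (1 - μ) = x := by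
        rw [← Real.rpow_add hx0]; norm_num
      have e4 : 8 * C * x ^ (1 - μ) + x ^ (1 - μ) ≤ x := by
        have := mul_le_mul_of_nonneg_right hxμpow (Real.rpow_nonneg hx0.le (1 - μ))
        rw [e3] at this; linarith
      have hpownn : 0 ≤ x ^ (1 - μ) := Real.rpow_nonneg hx0.le _
      have hnn : (0:ℝ) ≤ 2 * C := by positivity
      nlinarith [mul_le_mul_of_nonneg_left e1 hnn, mul_le_mul_of_nonneg_left e2 hnn, hpownn,
        mul_nonneg hnn hpownn]
    -- main inequality
    have main : C * Real.Gamma x ≤ 1 / 2 * Real.Gamma (x + μ) := by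
      have hg := gamma_gautschi hμ0 hμ1 hx0
      have hpow_pos : (0:ℝ) < (x + μ) ^ (1 - μ) := Real.rpow_pos_of_pos (by linarith) _
      -- from key : 4C (x+μ)^{1-μ} ≤ x
      -- gautschi : x Γx ≤ Γ(x+μ) (x+μ)^{1-μ}
      have h2C : (0:ℝ) ≤ 2 * C := by positivity
      have s1 := mul_le_mul_of_nonneg_left hg h2C
      have s2 := mul_le_mul_of_nonneg_right key hΓ2.le
      -- 2C x Γx ≤ 2C Γ(x+μ)(x+μ)^{1-μ} ≤ x Γ(x+μ)
      have s3 : 2 * C * (x * Real.Gamma x) ≤ x * Real.Gamma (x + μ) := by nlinarith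
      nlinarith [mul_pos hx0 hΓ2]
    rw [hxμ]
    have hCn : (0:ℝ) < C ^ n := pow_pos hC0 n
    rw [Real.norm_eq_abs, Real.norm_eq_abs, abs_of_pos (by positivity), abs_of_pos (by positivity)]
    rw [← mul_div_assoc, div_le_div_iff₀ hΓ2 hΓ1, pow_succ]
    have := mul_le_mul_of_nonneg_left main hCn.le
    nlinarith [this]



lemma mlE_summable (hμ0 : 0 < μ) (hμ1 : μ < 1) (hb : 0 < b) (x : ℝ) :
    Summable (fun n : ℕ => x ^ n / Real.Gamma (μ * n + b)) := by
  apply Summable.of_norm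
  have h := ml_summable hμ0 hμ1 hb (abs_nonneg x)
  convert h using 2 with n
  rw [norm_div, Real.norm_eq_abs, Real.norm_eq_abs, abs_pow,
    abs_of_pos (Real.Gamma_pos_of_pos (by positivity))]

lemma mlE_continuous (hμ0 : 0 < μ) (hμ1 : μ < 1) (hb : 0 < b) : Continuous (mlE μ b) := by
  rw [continuous_iff_continuousAt]
  intro x
  have hR : (0:ℝ) ≤ |x| + 1 := by positivity
  have hmem : x ∈ Metric.ball (0:ℝ) (|x| + 1) := by
    rw [Metric.mem_ball, Real.dist_eq, sub_zero]; linarith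
  have hball : Metric.ball (0:ℝ) (|x| + 1) ∈ nhds x :=
    Metric.isOpen_ball.mem_nhds hmem
  refine ContinuousWithinAt.continuousAt ?_ hball
  apply ContinuousOn.continuousWithinAt ?_ hmem
  have : ContinuousOn (fun y : ℝ => ∑' n : ℕ, y ^ n / Real.Gamma (μ * n + b))
      (Metric.ball (0:ℝ) (|x| + 1)) := by
    apply continuousOn_tsum (u := fun n : ℕ => (|x| + 1) ^ n / Real.Gamma (μ * n + b))
    · intro n
      exact (continuous_pow n).continuousOn.div_const _
    · exact ml_summable hμ0 hμ1 hb hR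
    · intro n y hy
      rw [Metric.mem_ball, Real.dist_eq, sub_zero] at hy
      rw [norm_div, Real.norm_eq_abs, Real.norm_eq_abs, abs_pow,
        abs_of_pos (Real.Gamma_pos_of_pos (by positivity))]
      gcongr
  exact this

lemma mlE_zero (hb : 0 < b) : mlE μ b 0 = 1 / Real.Gamma b := by
  rw [mlE, tsum_eq_single 0]
  · norm_num
  · intro n hn
    rw [zero_pow hn, zero_div]

lemma mlE_one_zero : mlE μ 1 0 = 1 := by
  rw [mlE_zero one_pos, Real.Gamma_one, div_one]

lemma mlE_shift (hμ0 : 0 < μ) (hμ1 : μ < 1) (x : ℝ) :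
    mlE μ 1 x = 1 + x * mlE μ (μ + 1) x := by
  rw [mlE, Summable.tsum_eq_zero_add (mlE_summable hμ0 hμ1 one_pos x)]
  norm_num
  rw [mlE, ← tsum_mul_left]
  congr 1
  ext n
  rw [pow_succ]
  push_cast
  ring_nf

/-- Real Beta integral on `[0,1]`. -/
lemma real_beta01 {a c : ℝ} (ha : 0 < a) (hc : 0 < c) :
    ∫ x in (0:ℝ)..1, x ^ (a - 1) * (1 - x) ^ (c - 1)
      = Real.Gamma a * Real.Gamma c / Real.Gamma (a + c) := by
  have h := Complex.Gamma_mul_Gamma_eq_betaIntegral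
    (s := (a:ℂ)) (t := (c:ℂ)) (by simpa using ha) (by simpa using hc)
  have hG : Complex.Gamma ((a:ℂ) + c) ≠ 0 := by
    rw [show ((a:ℂ) + c) = ((a + c : ℝ) : ℂ) by push_cast; ring, Complex.Gamma_ofReal]
    exact_mod_cast ne_of_gt (Real.Gamma_pos_of_pos (by linarith))
  have hbeta : Complex.betaIntegral a c
      = ((∫ x in (0:ℝ)..1, x ^ (a - 1) * (1 - x) ^ (c - 1) : ℝ) : ℂ) := by
    rw [Complex.betaIntegral, ← intervalIntegral.integral_ofReal]
    apply intervalIntegral.integral_congr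
    intro x hx
    rw [uIcc_of_le (by norm_num : (0:ℝ) ≤ 1)] at hx
    obtain ⟨h0, h1⟩ := hx
    push_cast
    rw [Complex.ofReal_cpow h0, Complex.ofReal_cpow (by linarith)]
    push_cast
    ring
  rw [hbeta] at h
  have := congrArg Complex.re h
  rw [show ((a:ℂ) + c) = ((a + c : ℝ) : ℂ) by push_cast; ring] at this
  rw [Complex.Gamma_ofReal, Complex.Gamma_ofReal, Complex.Gamma_ofReal] at this
  simp only [← Complex.ofReal_mul, Complex.ofReal_re] at this
  rw [eq_div_iff (ne_of_gt (Real.Gamma_pos_of_pos (by linarith : (0:ℝ) < a + c)))]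
  rw [this]
  push_cast
  simp [mul_comm]

/-- Scaled Beta integral on `[t,T]`. -/
lemma real_betaTT {a c t T : ℝ} (ha : 0 < a) (hc : 0 < c) (htT : t < T) :
    ∫ τ in t..T, (τ - t) ^ (a - 1) * (T - τ) ^ (c - 1)
      = (T - t) ^ (a + c - 1) * (Real.Gamma a * Real.Gamma c / Real.Gamma (a + c)) := by
  have hTt : (0:ℝ) < T - t := by linarith
  have hsub := intervalIntegral.integral_comp_mul_add
    (f := fun τ => (τ - t) ^ (a - 1) * (T - τ) ^ (c - 1)) (a := 0) (b := 1)
    (c := T - t) (ne_of_gt hTt) t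
  simp only [mul_zero, zero_add, mul_one] at hsub
  rw [show (T - t + t) = T by ring] at hsub
  have heq : ∫ x in (0:ℝ)..1, ((T - t) * x + t - t) ^ (a - 1) * (T - ((T - t) * x + t)) ^ (c - 1)
      = (T - t) ^ (a - 1) * (T - t) ^ (c - 1) * ∫ x in (0:ℝ)..1, x ^ (a-1) * (1-x) ^ (c-1) := by
    rw [← intervalIntegral.integral_const_mul]
    apply intervalIntegral.integral_congr
    intro x hx
    rw [uIcc_of_le (by norm_num : (0:ℝ) ≤ 1)] at hx
    obtain ⟨h0, h1⟩ := hx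
    dsimp only
    have e1 : (T - t) * x + t - t = (T - t) * x := by ring
    have e2 : T - ((T - t) * x + t) = (T - t) * (1 - x) := by ring
    rw [e1, e2, Real.mul_rpow hTt.le h0, Real.mul_rpow hTt.le (by linarith)]
    ring
  rw [heq, real_beta01 ha hc] at hsub
  -- hsub : ∫ x in 0..1, ... = (T-t)⁻¹ • ∫ τ in t..T, ...
  rw [smul_eq_mul] at hsub
  have := congrArg (fun y => (T - t) * y) hsub
  simp only [← mul_assoc, mul_inv_cancel₀ (ne_of_gt hTt), one_mul] at this
  rw [← this]
  have e : (T-t) * (T-t)^(a-1) * (T-t)^(c-1) = (T-t)^(a+c-1) := by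
    nth_rewrite 1 [← Real.rpow_one (T-t)]
    rw [← Real.rpow_add hTt, ← Real.rpow_add hTt]
    ring_nf
  rw [e]

lemma beta_integrable {a c t T : ℝ} (ha : 0 < a) (hc : 0 < c) (htT : t < T) :
    IntervalIntegrable (fun τ => (τ - t) ^ (a - 1) * (T - τ) ^ (c - 1)) volume t T := by
  set m := (t + T) / 2 with hm
  have htm : t < m := by rw [hm]; linarith
  have hmT : m < T := by rw [hm]; linarith
  have h1 : IntervalIntegrable (fun τ => (τ - t) ^ (a - 1) * (T - τ) ^ (c - 1)) volume t m := by
    apply IntervalIntegrable.mul_continuousOn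
    · have := (intervalIntegrable_rpow' (a := t - t) (b := m - t)
        (by linarith : (-1:ℝ) < a - 1)).comp_sub_right t
      simpa using this
    · apply ContinuousOn.rpow_const
      · exact (continuous_const.sub continuous_id).continuousOn
      · intro x hx
        rw [uIcc_of_le htm.le] at hx
        exact Or.inl (by simp; linarith [hx.2])
  have h2 : IntervalIntegrable (fun τ => (τ - t) ^ (a - 1) * (T - τ) ^ (c - 1)) volume m T := by
    rw [show (fun τ => (τ - t) ^ (a - 1) * (T - τ) ^ (c - 1))
      = (fun τ => (T - τ) ^ (c - 1) * (τ - t) ^ (a - 1)) by ext τ; ring]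
    apply IntervalIntegrable.mul_continuousOn
    · have := (intervalIntegrable_rpow' (a := T - m) (b := T - T)
        (by linarith : (-1:ℝ) < c - 1)).comp_sub_left T
      simpa using this
    · apply ContinuousOn.rpow_const
      · exact (continuous_id.sub continuous_const).continuousOn
      · intro x hx
        rw [uIcc_of_le hmT.le] at hx
        exact Or.inl (by simp; linarith [hx.1])
  exact h1.trans h2

/-- value of each term's integral, in closed form -/
lemma termval {μ β a t T : ℝ} (hμ0 : 0 < μ) (hβ : 0 < β) (ha : 0 < a) (htT : t < T)
    (L : ℝ) (n : ℕ) :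
    (L ^ n / Real.Gamma (μ * n + β)) *
      ((T - t) ^ (a + (μ * n + β) - 1) *
        (Real.Gamma a * Real.Gamma (μ * n + β) / Real.Gamma (a + (μ * n + β))))
    = (Real.Gamma a * (T - t) ^ (a + β - 1)) * ((L * (T - t) ^ μ) ^ n
        / Real.Gamma (μ * n + (a + β))) := by
  have hTt : (0:ℝ) < T - t := by linarith
  have hΓ : 0 < Real.Gamma (μ * n + β) := Real.Gamma_pos_of_pos (by positivity)
  have hΓ2 : 0 < Real.Gamma (μ * n + (a + β)) := Real.Gamma_pos_of_pos (by positivity)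
  have e0 : a + (μ * n + β) = μ * n + (a + β) := by ring
  have e1 : (T - t) ^ (a + (μ * n + β) - 1) = (T - t) ^ (a + β - 1) * (T - t) ^ (μ * (n:ℝ)) := by
    rw [← Real.rpow_add hTt]; ring_nf
  have e2 : (L * (T - t) ^ μ) ^ n = L ^ n * (T - t) ^ (μ * (n:ℝ)) := by
    rw [mul_pow, Real.rpow_mul hTt.le, Real.rpow_natCast]
  rw [e1, e2, e0]
  field_simp

/-- pointwise expansion of the integrand as a series -/
lemma pointwise_exp {μ β a t T l : ℝ} (hμ0 : 0 < μ) (hμ1 : μ < 1) (hβ : 0 < β) (htT : t < T)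
    {τ : ℝ} (hτ1 : t < τ) (hτ2 : τ < T) :
    (τ - t) ^ (a - 1) * ((T - τ) ^ (β - 1) * mlE μ β (-l * (T - τ) ^ μ))
      = ∑' n : ℕ, ((-l) ^ n / Real.Gamma (μ * n + β)) *
          ((τ - t) ^ (a - 1) * (T - τ) ^ (μ * n + β - 1)) := by
  have hTτ : (0:ℝ) < T - τ := by linarith
  rw [mlE, ← tsum_mul_left, ← tsum_mul_left]
  apply tsum_congr
  intro n
  have e2 : (-l * (T - τ) ^ μ) ^ n = (-l) ^ n * (T - τ) ^ (μ * (n:ℝ)) := by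
    rw [mul_pow, Real.rpow_mul hTτ.le, Real.rpow_natCast]
  have e3 : (T - τ) ^ (μ * (n:ℝ) + β - 1) = (T - τ) ^ (β - 1) * (T - τ) ^ (μ * (n:ℝ)) := by
    rw [← Real.rpow_add hTτ]; ring_nf
  rw [e2, e3]
  ring

/-- Main interchange lemma. -/
lemma key_integral {μ β a t T : ℝ} (l : ℝ) (hμ0 : 0 < μ) (hμ1 : μ < 1) (hβ : 0 < β)
    (ha : 0 < a) (htT : t < T) :
    ∫ τ in t..T, (τ - t) ^ (a - 1) * ((T - τ) ^ (β - 1) * mlE μ β (-l * (T - τ) ^ μ))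
      = Real.Gamma a * ((T - t) ^ (a + β - 1) * mlE μ (a + β) (-l * (T - t) ^ μ)) := by
  have hTt : (0:ℝ) < T - t := by linarith
  set F : ℕ → ℝ → ℝ := fun n τ => ((-l) ^ n / Real.Gamma (μ * n + β)) *
      ((τ - t) ^ (a - 1) * (T - τ) ^ (μ * n + β - 1)) with hF
  -- each term is integrable on Ioo
  have hint : ∀ n : ℕ, IntegrableOn (F n) (Ioo t T) volume := by
    intro n
    apply IntegrableOn.mono_set ?_ Ioo_subset_Ioc_self
    have := ((beta_integrable ha (by positivity : (0:ℝ) < μ * n + β) htT).const_mul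
      ((-l) ^ n / Real.Gamma (μ * n + β)))
    rw [intervalIntegrable_iff_integrableOn_Ioc_of_le htT.le] at this
    convert this using 1
  -- norm integrals in closed form
  have hnormint : ∀ n : ℕ, ∫ τ in Ioo t T, ‖F n τ‖
      = (Real.Gamma a * (T - t) ^ (a + β - 1)) * ((|l| * (T - t) ^ μ) ^ n
          / Real.Gamma (μ * n + (a + β))) := by
    intro n
    have hc : (0:ℝ) < μ * n + β := by positivity
    have hΓ : 0 < Real.Gamma (μ * n + β) := Real.Gamma_pos_of_pos hc
    have heq : ∀ τ ∈ Ioo t T, ‖F n τ‖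
        = (|l| ^ n / Real.Gamma (μ * n + β)) *
          ((τ - t) ^ (a - 1) * (T - τ) ^ (μ * n + β - 1)) := by
      intro τ hτ
      obtain ⟨h1, h2⟩ := hτ
      rw [hF]
      rw [Real.norm_eq_abs, abs_mul, abs_div, abs_pow, abs_neg, abs_mul,
        abs_of_pos hΓ, abs_of_nonneg (Real.rpow_nonneg (by linarith) _),
        abs_of_nonneg (Real.rpow_nonneg (by linarith) _)]
    rw [setIntegral_congr_fun measurableSet_Ioo heq, MeasureTheory.integral_const_mul,
      ← integral_Ioc_eq_integral_Ioo, ← integral_of_le htT.le,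
      real_betaTT ha hc htT, termval hμ0 hβ ha htT]
  -- summability of norm integrals
  have hsum : Summable (fun n : ℕ => ∫ τ in Ioo t T, ‖F n τ‖) := by
    apply Summable.congr ?_ (fun n => (hnormint n).symm)
    exact (ml_summable hμ0 hμ1 (by positivity : (0:ℝ) < a + β)
      (by positivity : (0:ℝ) ≤ |l| * (T - t) ^ μ)).mul_left _
  -- interchange
  have hinterchange := integral_tsum_of_summable_integral_norm
    (μ := volume.restrict (Ioo t T)) (fun n => hint n) hsum
  rw [integral_of_le htT.le, integral_Ioc_eq_integral_Ioo]
  rw [setIntegral_congr_fun measurableSet_Ioo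
    (fun τ hτ => pointwise_exp hμ0 hμ1 hβ htT hτ.1 hτ.2 (l := l) (a := a))]
  rw [← hinterchange]
  -- now evaluate each integral
  have heval : ∀ n : ℕ, ∫ τ in Ioo t T, F n τ
      = (Real.Gamma a * (T - t) ^ (a + β - 1)) * ((-l * (T - t) ^ μ) ^ n
          / Real.Gamma (μ * n + (a + β))) := by
    intro n
    have hc : (0:ℝ) < μ * n + β := by positivity
    rw [hF]
    rw [MeasureTheory.integral_const_mul, ← integral_Ioc_eq_integral_Ioo, ← integral_of_le htT.le,
      real_betaTT ha hc htT, termval hμ0 hβ ha htT]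
  rw [tsum_congr heval, tsum_mul_left, mlE]
  ring

variable {l T : ℝ}

/-- continuity of the argument map -/
lemma Xcont (hμ0 : 0 < μ) : Continuous (fun s : ℝ => -l * (T - s) ^ μ) := by
  apply Continuous.mul continuous_const
  have h1 : Continuous (fun x : ℝ => x ^ μ) := by
    rw [continuous_iff_continuousAt]
    exact fun x => Real.continuousAt_rpow_const x μ (Or.inr hμ0.le)
  exact h1.comp (continuous_const.sub continuous_id)

lemma g_cont (hμ0 : 0 < μ) (hμ1 : μ < 1) :
    ContinuousOn (fun τ : ℝ => (T - τ) ^ (μ - 1) * mlE μ μ (-l * (T - τ) ^ μ)) (Iio T) := by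
  apply ContinuousOn.mul
  · apply ContinuousOn.rpow_const (continuous_const.sub continuous_id).continuousOn
    intro x hx
    exact Or.inl (sub_ne_zero.2 (ne_of_lt hx).symm)
  · exact ((mlE_continuous hμ0 hμ1 hμ0).comp (Xcont hμ0)).continuousOn

lemma g_integrable (hμ0 : 0 < μ) (hμ1 : μ < 1) {s : ℝ} (hsT : s < T) :
    IntervalIntegrable (fun τ : ℝ => (T - τ) ^ (μ - 1) * mlE μ μ (-l * (T - τ) ^ μ))
      volume s T := by
  apply IntervalIntegrable.mul_continuousOn
  · have := (intervalIntegrable_rpow' (a := T - s) (b := T - T)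
      (by linarith : (-1:ℝ) < μ - 1)).comp_sub_left T
    simpa using this
  · exact ((mlE_continuous hμ0 hμ1 hμ0).comp (Xcont hμ0)).continuousOn

/-- representation of `E_{μ,1}(-l(T-s)^μ)` via an integral -/
lemma F_eq (hμ0 : 0 < μ) (hμ1 : μ < 1) {s : ℝ} (hsT : s < T) :
    mlE μ 1 (-l * (T - s) ^ μ)
      = 1 - l * ∫ τ in s..T, (T - τ) ^ (μ - 1) * mlE μ μ (-l * (T - τ) ^ μ) := by
  have h1 : ∫ τ in s..T, (T - τ) ^ (μ - 1) * mlE μ μ (-l * (T - τ) ^ μ)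
      = ∫ τ in s..T, (τ - s) ^ ((1:ℝ) - 1) * ((T - τ) ^ (μ - 1) * mlE μ μ (-l * (T - τ) ^ μ)) := by
    apply intervalIntegral.integral_congr
    intro τ _
    dsimp only
    rw [sub_self, Real.rpow_zero, one_mul]
  rw [h1, key_integral l hμ0 hμ1 hμ0 one_pos hsT, Real.Gamma_one, one_mul,
    show (1:ℝ) + μ - 1 = μ by ring, show (1:ℝ) + μ = μ + 1 by ring,
    mlE_shift hμ0 hμ1]
  ring

lemma F_hasDeriv (hμ0 : 0 < μ) (hμ1 : μ < 1) {s : ℝ} (hsT : s < T) :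
    HasDerivAt (fun u : ℝ => mlE μ 1 (-l * (T - u) ^ μ))
      (l * ((T - s) ^ (μ - 1) * mlE μ μ (-l * (T - s) ^ μ))) s := by
  set g : ℝ → ℝ := fun τ => (T - τ) ^ (μ - 1) * mlE μ μ (-l * (T - τ) ^ μ) with hg
  have hd : HasDerivAt (fun u : ℝ => ∫ τ in u..T, g τ) (-g s) s := by
    apply intervalIntegral.integral_hasDerivAt_left (g_integrable hμ0 hμ1 hsT)
    · exact (g_cont hμ0 hμ1).stronglyMeasurableAtFilter isOpen_Iio s hsT
    · exact ((g_cont hμ0 hμ1).continuousAt (Iio_mem_nhds hsT))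
  have hG : HasDerivAt (fun u : ℝ => 1 - l * ∫ τ in u..T, g τ) (l * g s) s := by
    have := (hd.const_mul l).const_sub 1
    rwa [mul_neg, neg_neg] at this
  apply hG.congr_of_eventuallyEq
  filter_upwards [Iio_mem_nhds hsT] with u hu
  exact F_eq hμ0 hμ1 hu

lemma rlIR_key {μ β a t T : ℝ} (l : ℝ) (hμ0 : 0 < μ) (hμ1 : μ < 1) (hβ : 0 < β)
    (ha : 0 < a) (htT : t < T) :
    rlIR a T (fun s => (T - s) ^ (β - 1) * mlE μ β (-l * (T - s) ^ μ)) t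
      = (T - t) ^ (a + β - 1) * mlE μ (a + β) (-l * (T - t) ^ μ) := by
  rw [rlIR, if_neg (ne_of_gt ha), key_integral l hμ0 hμ1 hβ ha htT, ← mul_assoc,
    inv_mul_cancel₀ (ne_of_gt (Real.Gamma_pos_of_pos ha)), one_mul]

end AuxML

/-- Let `0 ≤ ν ≤ 1`, `0 < μ < 1`, `λ > 0`, `T > 0` and
`v(t) := (T-t)^{-ν(1-μ)} E_{μ,1-ν(1-μ)}(-λ (T-t)^μ)` for `0 < t < T`. Then
(i) `I_{t,T}^{ν(1-μ)} v(t) = E_{μ,1}(-λ (T-t)^μ)` for `0 ≤ t < T`, so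
`I_{t,T}^{ν(1-μ)} v(t) → 1` as `t → T⁻`; and (ii) `D_{t,T}^{μ,1-ν} v(t) = -λ v(t)`
for `0 < t < T`. -/
theorem hilferDR_mlE (μ ν l T : ℝ) (hν0 : 0 ≤ ν) (hν1 : ν ≤ 1) (hμ0 : 0 < μ) (hμ1 : μ < 1)
    (hl : 0 < l) (hT : 0 < T) :
    (∀ t : ℝ, 0 ≤ t → t < T →
      rlIR (ν * (1 - μ)) T
        (fun s => (T - s) ^ (-(ν * (1 - μ))) * mlE μ (1 - ν * (1 - μ)) (-l * (T - s) ^ μ)) t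
        = mlE μ 1 (-l * (T - t) ^ μ)) ∧
    Filter.Tendsto
      (rlIR (ν * (1 - μ)) T
        (fun s => (T - s) ^ (-(ν * (1 - μ))) * mlE μ (1 - ν * (1 - μ)) (-l * (T - s) ^ μ)))
      (nhdsWithin T (Set.Iio T)) (nhds 1) ∧
    (∀ t : ℝ, 0 < t → t < T →
      hilferDR μ (1 - ν) T
        (fun s => (T - s) ^ (-(ν * (1 - μ))) * mlE μ (1 - ν * (1 - μ)) (-l * (T - s) ^ μ)) t
        = -l * ((T - t) ^ (-(ν * (1 - μ))) * mlE μ (1 - ν * (1 - μ)) (-l * (T - t) ^ μ))) := by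
  have h1μ : 0 < 1 - μ := by linarith
  have hνμ1 : ν * (1 - μ) < 1 := by nlinarith
  set v : ℝ → ℝ := fun s =>
    (T - s) ^ (-(ν * (1 - μ))) * mlE μ (1 - ν * (1 - μ)) (-l * (T - s) ^ μ) with hv
  -- part (i), for all t < T
  have claim1 : ∀ t : ℝ, t < T → rlIR (ν * (1 - μ)) T v t = mlE μ 1 (-l * (T - t) ^ μ) := by
    intro t htT
    rcases eq_or_lt_of_le hν0 with hν | hν
    · rw [rlIR, if_pos (by rw [← hν]; ring), hv]
      dsimp only
      rw [← hν]
      norm_num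
    · have ha : 0 < ν * (1 - μ) := by positivity
      have hβ : 0 < 1 - ν * (1 - μ) := by linarith
      have hv' : v = fun s => (T - s) ^ ((1 - ν * (1 - μ)) - 1)
          * mlE μ (1 - ν * (1 - μ)) (-l * (T - s) ^ μ) := by
        rw [hv]; ext s; rw [show (1 - ν * (1 - μ)) - 1 = -(ν * (1 - μ)) by ring]
      rw [hv', rlIR_key l hμ0 hμ1 hβ ha htT,
        show ν * (1 - μ) + (1 - ν * (1 - μ)) = 1 by ring, sub_self, Real.rpow_zero, one_mul]
  refine ⟨fun t _ htT => claim1 t htT, ?_, ?_⟩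
  -- part (i) limit
  · apply Filter.Tendsto.congr' (f₁ := fun t => mlE μ 1 (-l * (T - t) ^ μ))
    · filter_upwards [self_mem_nhdsWithin] with x hx
      exact (claim1 x hx).symm
    · have hc : ContinuousAt (fun t : ℝ => mlE μ 1 (-l * (T - t) ^ μ)) T :=
        ((mlE_continuous hμ0 hμ1 one_pos).comp (Xcont hμ0)).continuousAt
      have hval : mlE μ 1 (-l * (T - T) ^ μ) = 1 := by
        rw [sub_self, Real.zero_rpow (ne_of_gt hμ0), mul_zero, mlE_one_zero]
      have h2 : Filter.Tendsto (fun t : ℝ => mlE μ 1 (-l * (T - t) ^ μ))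
          (nhdsWithin T (Set.Iio T)) (nhds (mlE μ 1 (-l * (T - T) ^ μ))) :=
        hc.tendsto.mono_left nhdsWithin_le_nhds
      rwa [hval] at h2
  -- part (ii)
  · intro t ht0 htT
    have hderiv : ∀ s : ℝ, s < T →
        deriv (rlIR ((1 - (1 - ν)) * (1 - μ)) T v) s
          = l * ((T - s) ^ (μ - 1) * mlE μ μ (-l * (T - s) ^ μ)) := by
      intro s hsT
      have hEq : rlIR ((1 - (1 - ν)) * (1 - μ)) T v
          =ᶠ[nhds s] (fun u : ℝ => mlE μ 1 (-l * (T - u) ^ μ)) := by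
        filter_upwards [Iio_mem_nhds hsT] with u hu
        rw [show (1 - (1 - ν)) = ν by ring]
        exact claim1 u hu
      rw [hEq.deriv_eq, (F_hasDeriv hμ0 hμ1 hsT).deriv]
    rw [hilferDR]
    rcases eq_or_lt_of_le hν1 with hν | hν
    · -- ν = 1 : outer order is zero
      subst hν
      rw [rlIR, if_pos (by norm_num : ((1:ℝ) - 1) * (1 - μ) = 0), hderiv t htT]
      rw [show (1:ℝ) - 1 * (1 - μ) = μ by ring, show -((1:ℝ) * (1 - μ)) = μ - 1 by ring]
      ring
    · have ha' : 0 < (1 - ν) * (1 - μ) := by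
        apply mul_pos (by linarith) h1μ
      rw [rlIR, if_neg (ne_of_gt ha')]
      have hIeq : ∫ τ in t..T, (τ - t) ^ ((1 - ν) * (1 - μ) - 1)
            * deriv (rlIR ((1 - (1 - ν)) * (1 - μ)) T v) τ
          = l * ∫ τ in t..T, (τ - t) ^ ((1 - ν) * (1 - μ) - 1)
            * ((T - τ) ^ (μ - 1) * mlE μ μ (-l * (T - τ) ^ μ)) := by
        rw [intervalIntegral.integral_of_le htT.le, intervalIntegral.integral_of_le htT.le,
          integral_Ioc_eq_integral_Ioo, integral_Ioc_eq_integral_Ioo, ← MeasureTheory.integral_const_mul]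
        apply setIntegral_congr_fun measurableSet_Ioo
        intro τ hτ
        dsimp only
        rw [hderiv τ hτ.2]
        ring
      rw [hIeq, key_integral l hμ0 hμ1 hμ0 ha' htT]
      rw [show (1 - ν) * (1 - μ) + μ - 1 = -(ν * (1 - μ)) by ring,
        show (1 - ν) * (1 - μ) + μ = 1 - ν * (1 - μ) by ring]
      have hΓ : Real.Gamma ((1 - ν) * (1 - μ)) ≠ 0 := ne_of_gt (Real.Gamma_pos_of_pos ha')
      field_simp
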